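/- Let S be a positive affine semigroup (its only invertible element is 0). Then the set of irreducible elements of S is finite and generates S as a monoid. -/

import Mathlib

section Aux

variable {S : Type} [AddCancelCommMonoid S]

/-- Sum map sending a coefficient vector to the corresponding combination of generators. -/
noncomputable def sigmaSum (T : Finset S) (c : {x : S // x ∈ T} →₀ ℕ) : S :=
  c.sum fun t k => k • (t : S)

theorem sigmaSum_add (T : Finset S) (c c' : {x : S // x ∈ T} →₀ ℕ) :
    sigmaSum T (c + c') = sigmaSum T c + sigmaSum T c' := by
  classical
  unfold sigmaSum
  rw [Finsupp.sum_add_index]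
  · intro a _; exact zero_smul ℕ _
  · intro a _ b₁ b₂; exact add_smul b₁ b₂ _

theorem sigmaSum_single (T : Finset S) (t : {x : S // x ∈ T}) (k : ℕ) :
    sigmaSum T (Finsupp.single t k) = k • (t : S) := by
  classical
  unfold sigmaSum
  rw [Finsupp.sum_single_index]
  exact zero_smul ℕ _

theorem sigmaSum_zero (T : Finset S) : sigmaSum T 0 = 0 := by
  simp [sigmaSum]

end Aux

theorem positive_affine_semigroup_hilbert_basis
    (S : Type) [AddCancelCommMonoid S] (hFG : AddMonoid.FG S)
    (r : ℕ) (f : S →+ (Fin r → ℤ)) (hf : Function.Injective f)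
    (hpos : ∀ s : S, IsAddUnit s → s = 0) :
    {s : S | ¬ IsAddUnit s ∧ ∀ x y : S, s = x + y → IsAddUnit x ∨ IsAddUnit y}.Finite ∧
    AddSubmonoid.closure
      {s : S | ¬ IsAddUnit s ∧ ∀ x y : S, s = x + y → IsAddUnit x ∨ IsAddUnit y} = ⊤ := by
  classical
  set Irr := {s : S | ¬ IsAddUnit s ∧ ∀ x y : S, s = x + y → IsAddUnit x ∨ IsAddUnit y} with hIrr
  -- basic positivity facts
  have hunit : ∀ s : S, IsAddUnit s ↔ s = 0 := fun s =>
    ⟨hpos s, fun h => h ▸ isAddUnit_zero⟩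
  have hsum0 : ∀ x y : S, x + y = 0 → x = 0 ∧ y = 0 := by
    intro x y h
    constructor
    · exact hpos x ⟨⟨x, y, h, by rwa [add_comm] at h⟩, rfl⟩
    · exact hpos y ⟨⟨y, x, by rwa [add_comm] at h, h⟩, rfl⟩
  have htf : ∀ (n : ℕ) (x : S), n ≠ 0 → n • x = 0 → x = 0 := by
    intro n x hn hx
    apply hf
    have h1 : n • f x = 0 := by rw [← map_nsmul, hx, map_zero]
    have hfx : f x = 0 := by
      funext i
      have h2 : n • f x i = 0 := congrFun h1 i
      have h3 : (n : ℤ) * f x i = 0 := by rwa [nsmul_eq_mul] at h2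
      rcases mul_eq_zero.1 h3 with h | h
      · exact absurd (by exact_mod_cast h) hn
      · exact h
    rw [hfx, map_zero]
  -- a finite generating set not containing 0
  obtain ⟨T₀, hT₀⟩ := hFG.fg_top
  set T : Finset S := T₀.erase 0 with hT
  have hTgen : AddSubmonoid.closure (T : Set S) = ⊤ := by
    rw [eq_top_iff, ← hT₀]
    apply AddSubmonoid.closure_le.2
    intro t ht
    by_cases h0 : t = 0
    · rw [h0]; exact AddSubmonoid.zero_mem _
    · exact AddSubmonoid.subset_closure (Finset.mem_erase.2 ⟨h0, ht⟩)
  have hT0 : (0 : S) ∉ T := fun h => (Finset.mem_erase.1 h).1 rfl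
  -- every element has a representation
  have hrep : ∀ s : S, ∃ c, sigmaSum T c = s := by
    intro s
    have hs : s ∈ AddSubmonoid.closure (T : Set S) := hTgen ▸ AddSubmonoid.mem_top s
    induction hs using AddSubmonoid.closure_induction with
    | mem t ht => exact ⟨Finsupp.single ⟨t, ht⟩ 1, by rw [sigmaSum_single]; simp⟩
    | zero => exact ⟨0, sigmaSum_zero T⟩
    | add x y _ _ hx hy =>
        obtain ⟨cx, hcx⟩ := hx
        obtain ⟨cy, hcy⟩ := hy
        exact ⟨cx + cy, by rw [sigmaSum_add, hcx, hcy]⟩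
  -- sum zero implies coefficients zero
  have hzero : ∀ c, sigmaSum T c = 0 → c = 0 := by
    intro c hc
    by_contra hne
    obtain ⟨t, ht⟩ : ∃ t, t ∈ c.support := by
      by_contra h
      push_neg at h
      exact hne (Finsupp.ext fun a => by
        by_cases ha : a ∈ c.support
        · exact absurd ha (h a)
        · simpa using Finsupp.notMem_support_iff.1 ha)
    have hsplit : sigmaSum T c = (c t) • (t : S) + sigmaSum T (c.erase t) := by
      conv_lhs => rw [← Finsupp.single_add_erase t c]
      rw [sigmaSum_add, sigmaSum_single]
    rw [hsplit] at hc
    have h1 := (hsum0 _ _ hc).1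
    have hct : c t ≠ 0 := Finsupp.mem_support_iff.1 ht
    have : (t : S) = 0 := htf _ _ hct h1
    exact hT0 (this ▸ t.2)
  -- comparable representations of the same element are equal
  have hanti : ∀ c c', c ≤ c' → sigmaSum T c = sigmaSum T c' → c = c' := by
    intro c c' hle heq
    have hsub : c' = c + (c' - c) := by
      ext a
      have := hle a
      simp only [Finsupp.coe_add, Finsupp.coe_tsub, Pi.add_apply, Pi.sub_apply]
      omega
    have : sigmaSum T c + sigmaSum T (c' - c) = sigmaSum T c + 0 := by
      rw [← sigmaSum_add, ← hsub, ← heq, add_zero]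
    have hd0 : sigmaSum T (c' - c) = 0 := add_left_cancel this
    rw [hsub, hzero _ hd0, add_zero]
  -- the set of representations of any element is finite
  have hRfin : ∀ s : S, {c | sigmaSum T c = s}.Finite := by
    intro s
    have hac : IsAntichain (· ≤ ·) {c | sigmaSum T c = s} := by
      intro c hc c' hc' hne hle
      exact hne (hanti c c' hle (hc.trans hc'.symm))
    exact hac.finite_of_partiallyWellOrderedOn (Set.isPWO_of_wellQuasiOrderedLE _)
  -- degree function
  set deg : ({x : S // x ∈ T} →₀ ℕ) → ℕ := fun c => c.sum fun _ k => k with hdeg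
  have hdegzero : ∀ c, deg c = 0 → c = 0 := by
    intro c hc
    ext a
    by_cases ha : a ∈ c.support
    · exact absurd (Finset.sum_eq_zero_iff.1 hc a ha) (Finsupp.mem_support_iff.1 ha)
    · simpa using Finsupp.notMem_support_iff.1 ha
  have hdegadd : ∀ c c', deg (c + c') = deg c + deg c' := by
    intro c c'
    simp only [hdeg]
    rw [Finsupp.sum_add_index] <;> simp
  -- maximal degree of a representation
  have hne : ∀ s : S, ((hRfin s).toFinset.image deg).Nonempty := by
    intro s
    obtain ⟨c, hc⟩ := hrep s
    exact ⟨deg c, Finset.mem_image.2 ⟨c, (hRfin s).mem_toFinset.2 hc, rfl⟩⟩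
  set D : S → ℕ := fun s => ((hRfin s).toFinset.image deg).max' (hne s) with hD
  have hDle : ∀ s c, sigmaSum T c = s → deg c ≤ D s := by
    intro s c hc
    exact Finset.le_max' _ _ (Finset.mem_image.2 ⟨c, (hRfin s).mem_toFinset.2 hc, rfl⟩)
  have hDmem : ∀ s : S, ∃ c, sigmaSum T c = s ∧ deg c = D s := by
    intro s
    obtain ⟨c, hc, hcd⟩ := Finset.mem_image.1 (Finset.max'_mem _ (hne s))
    exact ⟨c, (hRfin s).mem_toFinset.1 hc, hcd⟩
  have hDpos : ∀ s : S, s ≠ 0 → 1 ≤ D s := by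
    intro s hs
    obtain ⟨c, hc, hcd⟩ := hDmem s
    rcases Nat.eq_zero_or_pos (D s) with h | h
    · exact absurd (by rw [← hc, hdegzero c (hcd.trans h), sigmaSum_zero]) hs
    · exact h
  have hDlt : ∀ x y : S, x ≠ 0 → y ≠ 0 → D x < D (x + y) := by
    intro x y hx hy
    obtain ⟨cx, hcx, hcxd⟩ := hDmem x
    obtain ⟨cy, hcy, hcyd⟩ := hDmem y
    have : deg (cx + cy) ≤ D (x + y) := hDle _ _ (by rw [sigmaSum_add, hcx, hcy])
    rw [hdegadd, hcxd, hcyd] at this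
    have := hDpos y hy
    omega
  -- generation
  have hgen : ∀ (n : ℕ) (s : S), D s ≤ n → s ∈ AddSubmonoid.closure Irr := by
    intro n
    induction n with
    | zero =>
        intro s hs
        have : s = 0 := by
          by_contra h
          exact absurd (le_trans (hDpos s h) hs) (by omega)
        rw [this]; exact AddSubmonoid.zero_mem _
    | succ n ih =>
        intro s hs
        by_cases h0 : s = 0
        · rw [h0]; exact AddSubmonoid.zero_mem _
        by_cases hi : s ∈ Irr
        · exact AddSubmonoid.subset_closure hi
        · rw [hIrr, Set.mem_setOf_eq] at hi
          push_neg at hi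
          obtain ⟨x, y, hxy, hxu, hyu⟩ := hi (fun h => h0 ((hunit s).1 h))
          have hx0 : x ≠ 0 := fun h => hxu ((hunit x).2 h)
          have hy0 : y ≠ 0 := fun h => hyu ((hunit y).2 h)
          have h1 : D x < D s := hxy ▸ hDlt x y hx0 hy0
          have h2 : D y < D s := by
            rw [hxy, add_comm]
            exact hDlt y x hy0 hx0
          rw [hxy]
          exact AddSubmonoid.add_mem _ (ih x (by omega)) (ih y (by omega))
  -- irreducibles are contained in T
  have hsubT : Irr ⊆ (T : Set S) := by
    intro s hs
    rw [hIrr, Set.mem_setOf_eq] at hs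
    obtain ⟨hsu, hsirr⟩ := hs
    have hs0 : s ≠ 0 := fun h => hsu ((hunit s).2 h)
    obtain ⟨c, hc⟩ := hrep s
    have hcne : c ≠ 0 := fun h => hs0 (by rw [← hc, h, sigmaSum_zero])
    obtain ⟨t, ht⟩ : ∃ t, t ∈ c.support := by
      by_contra h
      push_neg at h
      exact hcne (Finsupp.ext fun a => by
        by_cases ha : a ∈ c.support
        · exact absurd ha (h a)
        · simpa using Finsupp.notMem_support_iff.1 ha)
    have hct : c t ≠ 0 := Finsupp.mem_support_iff.1 ht
    have hsplit : s = (t : S) + ((c t - 1) • (t : S) + sigmaSum T (c.erase t)) := by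
      rw [← hc]
      conv_lhs => rw [← Finsupp.single_add_erase t c]
      rw [sigmaSum_add, sigmaSum_single, ← add_assoc]
      congr 1
      rw [add_comm, ← succ_nsmul]
      congr 1
      omega
    rcases hsirr _ _ hsplit with h | h
    · exact absurd ((hunit _).1 h ▸ t.2 : (0:S) ∈ T) hT0
    · have : s = (t : S) := by rw [hsplit, (hunit _).1 h, add_zero]
      exact this ▸ t.2
  constructor
  · exact Set.Finite.subset (T.finite_toSet) hsubT
  · rw [eq_top_iff]
    intro s _
    exact hgen (D s) s le_rfl
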